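/- arXiv:1110.2300 — 2 statements merged into one kernel-verified Lean document; each statement's English description precedes it below -/
import Mathlib

section
/- Let K be a field and A a commutative ℕ-graded ring that is a finitely generated K-algebra with A_0 = K, and let M be a finitely generated ℤ-graded A-module. Then the Krull dimension of M (the Krull dimension of A/Ann(M)) is positive if and only if M_s ≠ 0 for infinitely many integers s. -/
open DirectSum

set_option linter.unusedSectionVars false
set_option maxHeartbeats 1000000


open Order in
lemma auxA {R : Type*} [CommRing R] {p q : PrimeSpectrum R} (h : p < q) :
    0 < ringKrullDim R := by
  have h1 : ((RelSeries.singleton {(a, b) : PrimeSpectrum R × PrimeSpectrum R | a < b} p).snoc q (by simpa using h)).length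
      ≤ Order.krullDim (PrimeSpectrum R) := Order.LTSeries.length_le_krullDim _
  simp only [RelSeries.snoc_length, RelSeries.singleton_length] at h1
  exact lt_of_lt_of_le (by norm_num) h1

open Order in
lemma auxB {R : Type*} [CommRing R] (h : 0 < ringKrullDim R) :
    ∃ p q : PrimeSpectrum R, p < q := by
  by_contra hc
  push_neg at hc
  rcases isEmpty_or_nonempty (PrimeSpectrum R) with he | hn
  · rw [ringKrullDim, Order.krullDim_eq_bot] at h
    exact absurd h (by simp)
  · rw [ringKrullDim, Order.krullDim_eq_iSup_length] at h
    have h2 : ∀ s : LTSeries (PrimeSpectrum R), (s.length : ℕ∞) ≤ 0 := by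
      intro s
      rcases Nat.eq_zero_or_pos s.length with h0 | h0
      · simp [h0]
      · exact absurd (s.strictMono (show (⟨0, by omega⟩ : Fin (s.length + 1)) < ⟨1, by omega⟩
          from by simp [Fin.lt_def])) (hc _ _)
    have h3 : (⨆ s : LTSeries (PrimeSpectrum R), (s.length : ℕ∞)) ≤ (0 : ℕ∞) := iSup_le h2
    have h4 : (↑(⨆ s : LTSeries (PrimeSpectrum R), (s.length : ℕ∞)) : WithBot ℕ∞) ≤ ((0 : ℕ∞) : WithBot ℕ∞) := WithBot.coe_le_coe.mpr h3
    exact absurd h (not_lt.mpr (by simpa using h4))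

section Aux
variable {K A M : Type*} [Field K] [CommRing A] [Algebra K A]
    (𝒜 : ℕ → Submodule K A) [GradedAlgebra 𝒜]
    [AddCommGroup M] [Module K M] [Module A M] [IsScalarTower K A M]
    (ℳ : ℤ → Submodule K M) [DirectSum.Decomposition ℳ]
    (hsmul : ∀ (i : ℕ) (j : ℤ), ∀ a ∈ 𝒜 i, ∀ x ∈ ℳ j, a • x ∈ ℳ ((i : ℤ) + j))


include hsmul in
lemma aux_pow_smul {i : ℕ} {j : ℤ} (k : ℕ) {a : A} {x : M} (ha : a ∈ 𝒜 i) (hx : x ∈ ℳ j) :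
    a ^ k • x ∈ ℳ ((k * i : ℕ) + j) := by
  have h := SetLike.pow_mem_graded k ha
  rw [smul_eq_mul] at h
  exact hsmul _ _ _ h _ hx

include hsmul in
lemma aux_ann {B C : ℤ} (hbound : ∀ s : ℤ, ℳ s ≠ ⊥ → C ≤ s ∧ s ≤ B) {i : ℕ} (hi : 1 ≤ i)
    {a : A} (ha : a ∈ 𝒜 i) : a ^ ((B - C + 1).toNat) ∈ Module.annihilator A M := by
  classical
  set k := (B - C + 1).toNat with hk
  rw [Module.mem_annihilator]
  intro m
  conv_lhs => rw [← DirectSum.sum_support_decompose ℳ m, Finset.smul_sum]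
  apply Finset.sum_eq_zero
  intro s hs
  have hms : (decompose ℳ m s : M) ∈ ℳ s := SetLike.coe_mem _
  have h1 : a ^ k • (decompose ℳ m s : M) ∈ ℳ ((k * i : ℕ) + s) :=
    aux_pow_smul 𝒜 ℳ hsmul k ha hms
  have hsne : ℳ s ≠ ⊥ := by
    intro hbot
    rw [DFinsupp.mem_support_iff] at hs
    exact hs (by
      ext
      simpa using (hbot ▸ hms : (decompose ℳ m s : M) ∈ (⊥ : Submodule K M)))
  have hCs := hbound s hsne
  have htop : ℳ ((k * i : ℕ) + s) = ⊥ := by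
    by_contra hne
    have := (hbound _ hne).2
    have hki : k ≤ k * i := Nat.le_mul_of_pos_right k hi
    have h2 : (B - C + 1 : ℤ) ≤ (k : ℤ) := Int.self_le_toNat _
    have h3 : (k : ℤ) ≤ ((k * i : ℕ) : ℤ) := by exact_mod_cast hki
    omega
  rw [htop] at h1
  simpa using h1

include hsmul in
lemma aux_hom : (Module.annihilator A M).IsHomogeneous 𝒜 := by
  classical
  intro i r hr
  have key : ∀ t : ℤ, ∀ x ∈ ℳ t, (DirectSum.decompose 𝒜 r i : A) • x = 0 := by
    intro t x hx
    have h0 : r • x = 0 := Module.mem_annihilator.mp hr x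
    have hsum : r • x = ∑ i' ∈ (DirectSum.decompose 𝒜 r).support,
        ((DirectSum.decompose 𝒜 r i' : A) • x) := by
      conv_lhs => rw [← DirectSum.sum_support_decompose 𝒜 r, Finset.sum_smul]
    by_cases hi : i ∈ (DirectSum.decompose 𝒜 r).support
    · have e1 := congrArg (fun z => (DirectSum.decompose ℳ z ((i : ℤ) + t) : M))
        (hsum.symm.trans h0)
      simp only [decompose_zero, DirectSum.zero_apply, ZeroMemClass.coe_zero] at e1
      rw [decompose_sum, DFinsupp.finset_sum_apply, AddSubmonoidClass.coe_finset_sum] at e1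
      rw [Finset.sum_eq_single_of_mem i hi] at e1
      · rwa [DirectSum.decompose_of_mem_same ℳ
          (hsmul _ _ _ (SetLike.coe_mem _) _ hx)] at e1
      · intro i' _ hne
        have hneq : ((i' : ℤ) + t) ≠ ((i : ℤ) + t) := by
          intro h
          exact hne (by exact_mod_cast add_right_cancel h)
        rw [DirectSum.decompose_of_mem_ne ℳ (hsmul _ _ _ (SetLike.coe_mem _) _ hx) hneq]
    · rw [DFinsupp.notMem_support_iff] at hi
      rw [hi]
      simp
  rw [Module.mem_annihilator]
  intro m
  conv_lhs => rw [← DirectSum.sum_support_decompose ℳ m, Finset.smul_sum]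
  exact Finset.sum_eq_zero fun s _ => key s _ (SetLike.coe_mem _)



include hsmul in
lemma aux_easy (hA0 : 𝒜 0 = (1 : Submodule K A))
    (hfin : {s : ℤ | ℳ s ≠ ⊥}.Finite) :
    ¬ 0 < ringKrullDim (A ⧸ Module.annihilator A M) := by
  classical
  intro hdim
  obtain ⟨p, q, hpq⟩ := auxB hdim
  let I := Module.annihilator A M
  let P := p.asIdeal.comap (Ideal.Quotient.mk I)
  let Q := q.asIdeal.comap (Ideal.Quotient.mk I)
  haveI hPprime : P.IsPrime := Ideal.IsPrime.comap _
  haveI hQprime : Q.IsPrime := Ideal.IsPrime.comap _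
  obtain ⟨B, hB⟩ := hfin.bddAbove
  obtain ⟨C, hC⟩ := hfin.bddBelow
  have hbound : ∀ s : ℤ, ℳ s ≠ ⊥ → C ≤ s ∧ s ≤ B := fun s hs => ⟨hC hs, hB hs⟩
  have hIP : I ≤ P := by
    intro x hx
    show Ideal.Quotient.mk I x ∈ p.asIdeal
    rw [Ideal.Quotient.eq_zero_iff_mem.mpr hx]
    exact zero_mem _
  have hPQ : P ≤ Q :=
    Ideal.comap_mono ((PrimeSpectrum.asIdeal_le_asIdeal _ _).mpr hpq.le)
  have hpos : ∀ (i : ℕ), 1 ≤ i → ∀ a ∈ 𝒜 i, a ∈ P := by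
    intro i hi a ha
    exact hPprime.mem_of_pow_mem _ (hIP (aux_ann 𝒜 ℳ hsmul hbound hi ha))
  have hQP : Q ≤ P := by
    intro r hr
    have hrest : r - (decompose 𝒜 r 0 : A) ∈ P := by
      have hsplit : r - (decompose 𝒜 r 0 : A)
          = ∑ j ∈ (decompose 𝒜 r).support.erase 0, (decompose 𝒜 r j : A) := by
        by_cases h0 : 0 ∈ (decompose 𝒜 r).support
        · have := Finset.add_sum_erase _ (fun j => (decompose 𝒜 r j : A)) h0
          rw [DirectSum.sum_support_decompose 𝒜 r] at this
          exact (eq_sub_of_add_eq' this).symm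
        · rw [Finset.erase_eq_of_notMem h0, DirectSum.sum_support_decompose 𝒜 r]
          rw [DFinsupp.notMem_support_iff.mp h0]
          simp
      rw [hsplit]
      apply Ideal.sum_mem
      intro j hj
      exact hpos j (Nat.one_le_iff_ne_zero.mpr (Finset.ne_of_mem_erase hj)) _ (SetLike.coe_mem _)
    have h0Q : (decompose 𝒜 r 0 : A) ∈ Q := by
      have : (decompose 𝒜 r 0 : A) = r - (r - (decompose 𝒜 r 0 : A)) := by ring
      rw [this]
      exact Ideal.sub_mem _ hr (hPQ hrest)
    have hmem1 : (decompose 𝒜 r 0 : A) ∈ (1 : Submodule K A) := hA0 ▸ SetLike.coe_mem _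
    obtain ⟨c, hc⟩ := Submodule.mem_one.mp hmem1
    by_cases hc0 : c = 0
    · have : (decompose 𝒜 r 0 : A) = 0 := by rw [← hc, hc0, map_zero]
      have : r = (r - (decompose 𝒜 r 0 : A)) + (decompose 𝒜 r 0 : A) := by ring
      rw [this]
      exact Ideal.add_mem _ hrest (by rw [‹(decompose 𝒜 r 0 : A) = 0›]; exact zero_mem _)
    · exfalso
      have hu : IsUnit ((decompose 𝒜 r 0 : A)) := by
        rw [← hc]
        exact (IsUnit.mk0 c hc0).map (algebraMap K A)
      exact hQprime.ne_top (Ideal.eq_top_of_isUnit_mem _ h0Q hu)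
  have : q ≤ p := by
    intro x hx
    obtain ⟨y, rfl⟩ := Ideal.Quotient.mk_surjective x
    exact hQP (show y ∈ Q from hx)
  exact LT.lt.not_ge hpq this



include hsmul in
lemma aux_rad (hA0 : 𝒜 0 = (1 : Submodule K A))
    (hdim : ¬ 0 < ringKrullDim (A ⧸ Module.annihilator A M)) :
    ∀ (i : ℕ), 1 ≤ i → ∀ a ∈ 𝒜 i, a ∈ (Module.annihilator A M).radical := by
  classical
  intro i hi a ha
  by_contra hnot
  rw [Ideal.radical_eq_sInf, Ideal.mem_sInf] at hnot
  push_neg at hnot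
  obtain ⟨P, ⟨hIP, hPprime⟩, haP⟩ := hnot
  haveI := hPprime
  haveI hP'prime : (P.homogeneousCore 𝒜).toIdeal.IsPrime := hPprime.homogeneousCore
  have hIP' : Module.annihilator A M ≤ (P.homogeneousCore 𝒜).toIdeal := by
    have h1 := Ideal.homogeneousCore_mono 𝒜 hIP
    have h2 := (aux_hom 𝒜 ℳ hsmul).toIdeal_homogeneousCore_eq_self
    calc Module.annihilator A M = ((Module.annihilator A M).homogeneousCore 𝒜).toIdeal := h2.symm
      _ ≤ (P.homogeneousCore 𝒜).toIdeal := h1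
  have haP' : a ∉ (P.homogeneousCore 𝒜).toIdeal := fun h =>
    haP (Ideal.toIdeal_homogeneousCore_le 𝒜 P h)
  set φ := GradedRing.projZeroRingHom 𝒜 with hφ
  have hφidem : ∀ r : A, φ (φ r) = φ r := by
    intro r
    simp only [hφ, GradedRing.projZeroRingHom_apply]
    rw [DirectSum.decompose_of_mem_same 𝒜 (SetLike.coe_mem _)]
  have hφalg : ∀ r : A, ∃ c : K, φ r = algebraMap K A c := by
    intro r
    have h1 : (decompose 𝒜 r 0 : A) ∈ (1 : Submodule K A) := hA0 ▸ SetLike.coe_mem _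
    obtain ⟨c, hc⟩ := Submodule.mem_one.mp h1
    exact ⟨c, by simp only [hφ, GradedRing.projZeroRingHom_apply]; exact hc.symm⟩
  have hker : ∀ r : A, r - φ r ∈ RingHom.ker φ := by
    intro r
    rw [RingHom.mem_ker, map_sub, hφidem, sub_self]
  set Q := (P.homogeneousCore 𝒜).toIdeal ⊔ RingHom.ker φ with hQdef
  have hcoreφ : ∀ r ∈ (P.homogeneousCore 𝒜).toIdeal, φ r ∈ (P.homogeneousCore 𝒜).toIdeal :=
    fun r hr => (P.homogeneousCore 𝒜).isHomogeneous 0 hr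
  have hQne : Q ≠ ⊤ := by
    intro htop
    have h1 : (1 : A) ∈ Q := htop ▸ Submodule.mem_top
    obtain ⟨u, hu, t, ht, huv⟩ := Submodule.mem_sup.mp h1
    have : φ (1 : A) = φ u := by
      rw [← huv, map_add, RingHom.mem_ker.mp ht, add_zero]
    rw [map_one] at this
    exact hP'prime.ne_top (Ideal.eq_top_iff_one _ |>.mpr (this ▸ hcoreφ u hu))
  have hQprime : Q.IsPrime := by
    refine ⟨hQne, ?_⟩
    intro x y hxy
    by_contra hc
    push_neg at hc
    obtain ⟨hxQ, hyQ⟩ := hc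
    have hxk : x - φ x ∈ Q := le_sup_right (a := (P.homogeneousCore 𝒜).toIdeal) (hker x)
    have hyk : y - φ y ∈ Q := le_sup_right (a := (P.homogeneousCore 𝒜).toIdeal) (hker y)
    obtain ⟨cx, hcx⟩ := hφalg x
    obtain ⟨cy, hcy⟩ := hφalg y
    have hcx0 : cx ≠ 0 := by
      rintro rfl
      rw [map_zero] at hcx
      refine hxQ ?_
      have h2 := Q.add_mem hxk (show φ x ∈ Q by rw [hcx]; exact Q.zero_mem)
      simpa using h2
    have hcy0 : cy ≠ 0 := by
      rintro rfl
      rw [map_zero] at hcy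
      refine hyQ ?_
      have h2 := Q.add_mem hyk (show φ y ∈ Q by rw [hcy]; exact Q.zero_mem)
      simpa using h2
    have hφxy : φ (x * y) ∈ Q := by
      have : φ (x * y) = x * y - (x * y - φ (x * y)) := by ring
      rw [this]
      exact Ideal.sub_mem _ hxy (le_sup_right (a := (P.homogeneousCore 𝒜).toIdeal) (hker (x*y)))
    rw [map_mul, hcx, hcy, ← map_mul] at hφxy
    have hu : IsUnit (algebraMap K A (cx * cy)) :=
      (IsUnit.mk0 _ (mul_ne_zero hcx0 hcy0)).map (algebraMap K A)
    exact hQne (Ideal.eq_top_of_isUnit_mem _ hφxy hu)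
  have haQ : a ∈ Q := by
    apply le_sup_right (a := (P.homogeneousCore 𝒜).toIdeal)
    rw [RingHom.mem_ker, hφ, GradedRing.projZeroRingHom_apply]
    rw [DirectSum.decompose_of_mem_ne 𝒜 ha (by omega)]
  have hlt : (P.homogeneousCore 𝒜).toIdeal < Q :=
    lt_of_le_of_ne le_sup_left (fun h => haP' (h ▸ haQ))
  -- map to the quotient
  have hkerle : RingHom.ker (Ideal.Quotient.mk (Module.annihilator A M))
      ≤ (P.homogeneousCore 𝒜).toIdeal := by
    rw [Ideal.mk_ker]; exact hIP'
  haveI hp' : ((P.homogeneousCore 𝒜).toIdeal.map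
      (Ideal.Quotient.mk (Module.annihilator A M))).IsPrime :=
    Ideal.map_isPrime_of_surjective Ideal.Quotient.mk_surjective hkerle
  haveI hq' : (Q.map (Ideal.Quotient.mk (Module.annihilator A M))).IsPrime :=
    Ideal.map_isPrime_of_surjective Ideal.Quotient.mk_surjective (le_trans hkerle hlt.le)
  have hmaplt : (P.homogeneousCore 𝒜).toIdeal.map (Ideal.Quotient.mk (Module.annihilator A M))
      < Q.map (Ideal.Quotient.mk (Module.annihilator A M)) := by
    refine lt_of_le_of_ne (Ideal.map_mono hlt.le) ?_
    intro heq
    have h1 := congrArg (Ideal.comap (Ideal.Quotient.mk (Module.annihilator A M))) heq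
    simp only [Ideal.comap_map_of_surjective _ Ideal.Quotient.mk_surjective,
      ← RingHom.ker_eq_comap_bot, Ideal.mk_ker, sup_eq_left.mpr hIP',
      sup_eq_left.mpr (le_trans hIP' hlt.le)] at h1
    exact hlt.ne h1
  have : (⟨_, hp'⟩ : PrimeSpectrum (A ⧸ Module.annihilator A M)) < ⟨_, hq'⟩ := by
    rw [← PrimeSpectrum.asIdeal_lt_asIdeal]
    exact hmaplt
  exact hdim (auxA this)


include hsmul in
lemma aux_finite (hA0 : 𝒜 0 = (1 : Submodule K A)) (hfg : Algebra.FiniteType K A)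
    [Module.Finite A M]
    (hdim : ¬ 0 < ringKrullDim (A ⧸ Module.annihilator A M)) :
    {s : ℤ | ℳ s ≠ ⊥}.Finite := by
  classical
  have hrad := aux_rad 𝒜 ℳ hsmul hA0 hdim
  haveI : Algebra.FiniteType K A := hfg
  haveI : IsNoetherianRing A := Algebra.FiniteType.isNoetherianRing K A
  set Aplus : Ideal A := Ideal.span (⋃ i ∈ Set.Ici 1, ((𝒜 i : Set A))) with hAplus
  have hAplusrad : Aplus ≤ (Module.annihilator A M).radical := by
    rw [Ideal.span_le]
    intro x hx
    simp only [Set.mem_iUnion, Set.mem_Ici] at hx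
    obtain ⟨i, hi, hxi⟩ := hx
    exact hrad i hi x hxi
  obtain ⟨k0, hk0⟩ := Ideal.exists_pow_le_of_le_radical_of_fg hAplusrad
    (IsNoetherian.noetherian Aplus)
  have hk : Aplus ^ (k0 + 1) ≤ Module.annihilator A M :=
    le_trans (Ideal.pow_le_pow_right (Nat.le_succ _)) hk0
  -- homogeneous algebra generators of degree in [1, D]
  obtain ⟨sA, hsA⟩ := hfg.out
  set D := sA.sup (fun y => (decompose 𝒜 y).support.sup id) with hD
  set Gset : Set A := {b | ∃ i, 1 ≤ i ∧ i ≤ D ∧ b ∈ 𝒜 i} with hGset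
  have hadj : Algebra.adjoin K Gset = ⊤ := by
    rw [eq_top_iff, ← hsA, Algebra.adjoin_le_iff]
    intro y hy
    rw [← DirectSum.sum_support_decompose 𝒜 y]
    apply sum_mem
    intro i hi
    by_cases h0 : i = 0
    · subst h0
      have h1 : (decompose 𝒜 y 0 : A) ∈ (1 : Submodule K A) := hA0 ▸ SetLike.coe_mem _
      obtain ⟨c, hc⟩ := Submodule.mem_one.mp h1
      rw [← hc]
      exact Subalgebra.algebraMap_mem _ _
    · apply Algebra.subset_adjoin
      refine ⟨i, Nat.one_le_iff_ne_zero.mpr h0, ?_, SetLike.coe_mem _⟩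
      exact le_trans (Finset.le_sup (f := id) hi)
        (Finset.le_sup (f := fun y => (decompose 𝒜 y).support.sup id) hy)
  -- homogeneous components of module generators
  obtain ⟨sM, hsM⟩ := Module.Finite.fg_top (R := A) (M := M)
  set F : Finset ℤ := sM.biUnion (fun m => (decompose ℳ m).support) with hF
  set Xset : Set M := {x | ∃ t, t ∈ F ∧ x ∈ ℳ t} with hXset
  set Pset : Set M := {v | ∃ l : List A, (∀ b ∈ l, b ∈ Gset) ∧ ∃ x ∈ Xset, v = l.prod • x}
    with hPset
  set W := Submodule.span K Pset with hWdef
  have hsmulW : ∀ a : A, ∀ v ∈ W, a • v ∈ W := by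
    let R : Subalgebra K A :=
      { carrier := {a | ∀ v ∈ W, a • v ∈ W}
        mul_mem' := fun {a b} ha hb v hv => by rw [mul_smul]; exact ha _ (hb _ hv)
        add_mem' := fun {a b} ha hb v hv => by rw [add_smul]; exact W.add_mem (ha _ hv) (hb _ hv)
        one_mem' := fun v hv => by rwa [one_smul]
        algebraMap_mem' := fun c v hv => by rw [algebraMap_smul]; exact W.smul_mem c hv }
    have hGR : Gset ⊆ (R : Set A) := by
      intro g hg v hv
      induction hv using Submodule.span_induction with
      | mem u hu =>
        obtain ⟨l, hl, x, hx, rfl⟩ := hu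
        refine Submodule.subset_span ⟨g :: l, ?_, x, hx, ?_⟩
        · intro b hb
          rcases List.mem_cons.mp hb with rfl | hb
          exacts [hg, hl _ hb]
        · rw [List.prod_cons, mul_smul]
      | zero => rw [smul_zero]; exact W.zero_mem
      | add u w hu hw hu' hw' => rw [smul_add]; exact W.add_mem hu' hw'
      | smul c u hu hu' =>
        have hcomm : g • (c • u) = c • (g • u) := by
          rw [← algebraMap_smul A c u, ← mul_smul, mul_comm, mul_smul, algebraMap_smul]
        rw [hcomm]
        exact W.smul_mem c hu'
    have hRtop : Algebra.adjoin K Gset ≤ R := Algebra.adjoin_le hGR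
    rw [hadj] at hRtop
    exact fun a v hv => hRtop Algebra.mem_top v hv
  have hWtop : ∀ m : M, m ∈ W := by
    let W' : Submodule A M :=
      { carrier := (W : Set M)
        add_mem' := fun {a b} ha hb => W.add_mem ha hb
        zero_mem' := W.zero_mem
        smul_mem' := fun a {v} hv => hsmulW a v hv }
    have hsub : (sM : Set M) ⊆ (W' : Set M) := by
      intro m hm
      show m ∈ W
      rw [← DirectSum.sum_support_decompose ℳ m]
      apply Submodule.sum_mem
      intro t ht
      apply Submodule.subset_span
      exact ⟨[], by simp, (decompose ℳ m t : M),
        ⟨t, Finset.mem_biUnion.mpr ⟨m, hm, ht⟩, SetLike.coe_mem _⟩, by simp⟩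
    intro m
    have hm : m ∈ Submodule.span A (sM : Set M) := by rw [hsM]; trivial
    exact (Submodule.span_le.mpr hsub) hm
  have hldeg : ∀ l : List A, (∀ b ∈ l, b ∈ Gset) →
      ∃ n : ℕ, n ≤ D * l.length ∧ l.prod ∈ 𝒜 n := by
    intro l
    induction l with
    | nil => exact fun _ => ⟨0, by simp, by simpa using SetLike.one_mem_graded 𝒜⟩
    | cons b t ih =>
      intro hl
      obtain ⟨n, hn, hp⟩ := ih (fun x hx => hl x (List.mem_cons_of_mem _ hx))
      obtain ⟨i, hi1, hiD, hbi⟩ := hl b List.mem_cons_self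
      refine ⟨i + n, ?_, by rw [List.prod_cons]; exact SetLike.mul_mem_graded hbi hp⟩
      rw [List.length_cons, Nat.mul_succ]
      linarith
  have hlpow : ∀ l : List A, (∀ b ∈ l, b ∈ Gset) → l.prod ∈ Aplus ^ l.length := by
    intro l
    induction l with
    | nil => simp [Ideal.one_eq_top]
    | cons b t ih =>
      intro hl
      rw [List.prod_cons, List.length_cons, pow_succ, mul_comm b t.prod]
      refine Ideal.mul_mem_mul (ih (fun x hx => hl x (List.mem_cons_of_mem _ hx))) ?_
      obtain ⟨i, hi1, hiD, hbi⟩ := hl b List.mem_cons_self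
      exact Ideal.subset_span (Set.mem_iUnion₂.mpr ⟨i, hi1, hbi⟩)
  set Sfin : Finset ℤ := ((Finset.range (D * k0 + 1)) ×ˢ F).image
    (fun p => (p.1 : ℤ) + p.2) with hSfin
  have hPV : ∀ v ∈ Pset, v ∈ ⨆ t : {t : ℤ // t ∈ Sfin}, ℳ (t : ℤ) := by
    rintro v ⟨l, hl, x, ⟨t0, ht0F, hxt0⟩, rfl⟩
    by_cases hlen : l.length ≤ k0
    · obtain ⟨n, hn, hp⟩ := hldeg l hl
      have hv : l.prod • x ∈ ℳ ((n : ℤ) + t0) := hsmul _ _ _ hp _ hxt0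
      have hnD : n ≤ D * k0 := le_trans hn (Nat.mul_le_mul_left D hlen)
      have hmem : ((n : ℤ) + t0) ∈ Sfin := Finset.mem_image.mpr
        ⟨(n, t0), Finset.mem_product.mpr
          ⟨Finset.mem_range.mpr (by omega), ht0F⟩, rfl⟩
      exact le_iSup (fun t : {t : ℤ // t ∈ Sfin} => ℳ (t : ℤ)) ⟨_, hmem⟩ hv
    · have h1 : l.prod ∈ Aplus ^ l.length := hlpow l hl
      have h2 : l.prod ∈ Module.annihilator A M :=
        hk (Ideal.pow_le_pow_right (by omega) h1)
      rw [Module.mem_annihilator.mp h2 x]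
      exact zero_mem _
  have hWV : W ≤ ⨆ t : {t : ℤ // t ∈ Sfin}, ℳ (t : ℤ) := Submodule.span_le.mpr hPV
  apply Set.Finite.subset (Sfin.finite_toSet)
  intro s hs
  by_contra hsnot
  apply hs
  rw [Submodule.eq_bot_iff]
  intro v hv
  have h1 : v ∈ ⨆ t : {t : ℤ // t ∈ Sfin}, ℳ (t : ℤ) := hWV (hWtop v)
  have h2 : v ∈ ⨆ t, ⨆ (_ : t ≠ s), ℳ t := by
    refine (iSup_le fun t => ?_ : (⨆ t : {t : ℤ // t ∈ Sfin}, ℳ (t : ℤ)) ≤ _) h1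
    exact le_iSup₂ (f := fun (t' : ℤ) (_ : t' ≠ s) => ℳ t') (t : ℤ)
      (fun h => hsnot (by rw [← h]; exact t.2))
  have hdisj := (DirectSum.Decomposition.isInternal ℳ).submodule_iSupIndep s
  have h3 : v ∈ ℳ s ⊓ ⨆ t, ⨆ (_ : t ≠ s), ℳ t := Submodule.mem_inf.mpr ⟨hv, h2⟩
  rw [hdisj.eq_bot] at h3
  simpa using h3

end Aux

/-- For a commutative ℕ-graded ring `A` that is a finitely generated `K`-algebra with
`A_0 = K` (`K` a field), and a finitely generated ℤ-graded `A`-module `M`, the Krull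
dimension of `M` (i.e. of `A / Ann(M)`) is positive if and only if `M_s ≠ 0` for
infinitely many `s`. -/
theorem stmt11 {K A M : Type*} [Field K] [CommRing A] [Algebra K A]
    (𝒜 : ℕ → Submodule K A) [GradedAlgebra 𝒜]
    (hA0 : 𝒜 0 = (1 : Submodule K A))
    (hfg : Algebra.FiniteType K A)
    [AddCommGroup M] [Module K M] [Module A M] [IsScalarTower K A M]
    [Module.Finite A M]
    (ℳ : ℤ → Submodule K M) [DirectSum.Decomposition ℳ]
    (hsmul : ∀ (i : ℕ) (j : ℤ), ∀ a ∈ 𝒜 i, ∀ x ∈ ℳ j, a • x ∈ ℳ ((i : ℤ) + j)) :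
    0 < ringKrullDim (A ⧸ Module.annihilator A M) ↔
      {s : ℤ | ℳ s ≠ ⊥}.Infinite := by
  constructor
  · intro hdim
    by_contra hinf
    rw [Set.not_infinite] at hinf
    exact aux_easy 𝒜 ℳ hsmul hA0 hinf hdim
  · intro hinf
    by_contra hdim
    exact (aux_finite 𝒜 ℳ hsmul hA0 hfg hdim).not_infinite hinf
end

section
/- Let K be a field, S = K[x_1, ..., x_n] the polynomial ring, and I ⊆ S a monomial ideal. Then every associated prime ideal of S/I is a monomial prime ideal, that is, an ideal of the form P_F = ({x_i : i ∈ F}) for some subset F ⊆ {1, ..., n}. -/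
open MvPolynomial

/-- A monomial ideal: an ideal generated by monomials. -/
def IsMonomialIdeal {K : Type*} [Field K] {n : ℕ}
    (I : Ideal (MvPolynomial (Fin n) K)) : Prop :=
  ∃ A : Set (Fin n →₀ ℕ),
    I = Ideal.span ((fun a => (monomial a (1 : K) : MvPolynomial (Fin n) K)) '' A)

section Aux

variable {K : Type*} [Field K] {n : ℕ}

/-- fix the lexicographic monomial order on `Fin n →₀ ℕ` -/
noncomputable def mo (n : ℕ) : MonomialOrder (Fin n) := MonomialOrder.lex

/-- a monomial is in the monomial ideal iff its exponent dominates a generator (or coeff 0) -/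
lemma monomial_mem_span (A : Set (Fin n →₀ ℕ)) {v : Fin n →₀ ℕ} (c : K)
    (h : ∃ a ∈ A, a ≤ v) :
    (monomial v c : MvPolynomial (Fin n) K) ∈
      Ideal.span ((fun a => (monomial a (1 : K) : MvPolynomial (Fin n) K)) '' A) := by
  classical
  rw [mem_ideal_span_monomial_image]
  intro u hu
  rw [support_monomial] at hu
  split_ifs at hu with hc
  · exact absurd hu (Finset.notMem_empty u)
  · rw [Finset.mem_singleton] at hu
    exact hu ▸ h

set_option maxHeartbeats 1000000 in
/-- the top coefficient of a product -/
lemma coeff_top_mul (m : MonomialOrder (Fin n)) {g f : MvPolynomial (Fin n) K}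
    {u₀ w₀ : Fin n →₀ ℕ}
    (hu : ∀ u ∈ g.support, m.toSyn u ≤ m.toSyn u₀)
    (hw : ∀ w ∈ f.support, m.toSyn w ≤ m.toSyn w₀) :
    coeff (u₀ + w₀) (g * f) = coeff u₀ g * coeff w₀ f := by
  rw [coeff_mul]
  apply Finset.sum_eq_single (u₀, w₀)
  · rintro ⟨i, j⟩ hij hne
    rw [Finset.HasAntidiagonal.mem_antidiagonal] at hij
    by_contra hc
    have hi : i ∈ g.support := mem_support_iff.2 (left_ne_zero_of_mul hc)
    have hj : j ∈ f.support := mem_support_iff.2 (right_ne_zero_of_mul hc)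
    have h1 := hu i hi
    have h2 := hw j hj
    have hsum : m.toSyn i + m.toSyn j = m.toSyn u₀ + m.toSyn w₀ := by
      rw [← map_add, ← map_add, hij]
    have hiu : i = u₀ := by
      by_contra hne'
      have : m.toSyn i < m.toSyn u₀ :=
        lt_of_le_of_ne h1 (fun h => hne' (m.toSyn.injective h))
      exact absurd hsum (ne_of_lt (add_lt_add_of_lt_of_le this h2))
    subst hiu
    have : j = w₀ := add_left_cancel hij
    exact hne (by rw [this])
  · intro h
    refine absurd ?_ h
    rw [Finset.HasAntidiagonal.mem_antidiagonal]

lemma support_monomial_mul_card (s : Fin n →₀ ℕ) (p : MvPolynomial (Fin n) K) :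
    ((monomial s (1 : K)) * p).support.card ≤ p.support.card := by
  classical
  have hsub : ((monomial s (1 : K)) * p).support ⊆ p.support.image (s + ·) := by
    intro v hv
    rw [mem_support_iff, coeff_monomial_mul'] at hv
    split_ifs at hv with hle
    · rw [one_mul] at hv
      exact Finset.mem_image.2 ⟨v - s, mem_support_iff.2 hv, by
        rw [add_tsub_cancel_of_le hle]⟩
    · exact absurd rfl hv
  exact le_trans (Finset.card_le_card hsub) (Finset.card_image_le)

/-- key induction: if `g * f ∈ I` then `x^{u₀·r} * f ∈ I` where `u₀` is the top
exponent of `g` and `r` bounds the number of terms of `f`. -/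
lemma key (A : Set (Fin n →₀ ℕ)) (g : MvPolynomial (Fin n) K) (u₀ : Fin n →₀ ℕ)
    (hg : coeff u₀ g ≠ 0)
    (hu : ∀ u ∈ g.support, (mo n).toSyn u ≤ (mo n).toSyn u₀) :
    ∀ r : ℕ, ∀ f : MvPolynomial (Fin n) K, f.support.card ≤ r →
      g * f ∈ Ideal.span ((fun a => (monomial a (1 : K) : MvPolynomial (Fin n) K)) '' A) →
      (monomial u₀ (1 : K)) ^ r * f ∈
        Ideal.span ((fun a => (monomial a (1 : K) : MvPolynomial (Fin n) K)) '' A) := by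
  set I := Ideal.span ((fun a => (monomial a (1 : K) : MvPolynomial (Fin n) K)) '' A) with hIdef
  intro r
  induction r with
  | zero =>
    intro f hf _
    rw [Nat.le_zero, Finset.card_eq_zero, support_eq_empty] at hf
    rw [hf, mul_zero]
    exact Ideal.zero_mem I
  | succ r ih =>
    intro f hcard hgf
    by_cases hf0 : f = 0
    · rw [hf0, mul_zero]; exact Ideal.zero_mem I
    · have hne : f.support.Nonempty := support_nonempty.2 hf0
      obtain ⟨w₀, hw₀mem, hw₀⟩ := f.support.exists_max_image (fun w => (mo n).toSyn w) hne
      have hcw : coeff w₀ f ≠ 0 := mem_support_iff.1 hw₀mem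
      -- the top coefficient of g * f is nonzero, so the top monomial is in I
      have htop : coeff (u₀ + w₀) (g * f) ≠ 0 := by
        rw [coeff_top_mul (mo n) hu hw₀]
        exact mul_ne_zero hg hcw
      have hmonI : ∀ c : K, (monomial (u₀ + w₀) c : MvPolynomial (Fin n) K) ∈ I := by
        intro c
        apply monomial_mem_span
        have := mem_ideal_span_monomial_image.1 hgf (u₀ + w₀) (mem_support_iff.2 htop)
        exact this
      -- remove the top term of f
      set f' := f - monomial w₀ (coeff w₀ f) with hf'def
      have hsupp' : f'.support ⊆ f.support.erase w₀ := by
        intro u hu'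
        rw [mem_support_iff, hf'def, coeff_sub, coeff_monomial] at hu'
        rcases eq_or_ne w₀ u with h | h
        · rw [if_pos h, h, sub_self] at hu'
          exact absurd rfl hu'
        · rw [if_neg h, sub_zero] at hu'
          exact Finset.mem_erase.2 ⟨Ne.symm h, mem_support_iff.2 hu'⟩
      have hcard' : f'.support.card ≤ r := by
        have h1 : (f.support.erase w₀).card ≤ r := by
          have := Finset.card_erase_of_mem hw₀mem
          omega
        exact le_trans (Finset.card_le_card hsupp') h1
      -- g * (monomial u₀ 1 * f') ∈ I
      have hmm : (monomial u₀ (1 : K)) * monomial w₀ (coeff w₀ f)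
          = monomial (u₀ + w₀) (coeff w₀ f) := by
        rw [monomial_mul, one_mul]
      have hgf' : g * ((monomial u₀ (1 : K)) * f') ∈ I := by
        have heq : g * ((monomial u₀ (1 : K)) * f')
            = (monomial u₀ (1 : K)) * (g * f)
              - g * ((monomial u₀ (1 : K)) * monomial w₀ (coeff w₀ f)) := by
          rw [hf'def]; ring
        rw [heq]
        apply Ideal.sub_mem
        · exact Ideal.mul_mem_left I _ hgf
        · rw [hmm]
          exact Ideal.mul_mem_left I _ (hmonI _)
      have hcard'' : ((monomial u₀ (1 : K)) * f').support.card ≤ r :=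
        le_trans (support_monomial_mul_card u₀ f') hcard'
      have hih := ih ((monomial u₀ (1 : K)) * f') hcard'' hgf'
      -- conclude
      have hfinal : (monomial u₀ (1 : K)) ^ (r + 1) * f
          = (monomial u₀ (1 : K)) ^ r * ((monomial u₀ (1 : K)) * f')
            + (monomial u₀ (1 : K)) ^ r * ((monomial u₀ (1 : K)) * monomial w₀ (coeff w₀ f)) := by
        rw [hf'def]; ring
      rw [hfinal]
      apply Ideal.add_mem
      · exact hih
      · rw [hmm]
        exact Ideal.mul_mem_left I _ (hmonI _)

/-- every exponent in the support of an element of an associated-prime-like ideal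
gives a monomial in the ideal -/
lemma comp_mem (A : Set (Fin n →₀ ℕ)) (p : Ideal (MvPolynomial (Fin n) K))
    (hprime : p.IsPrime) (f : MvPolynomial (Fin n) K)
    (hmemp : ∀ g : MvPolynomial (Fin n) K, g ∈ p ↔
      g * f ∈ Ideal.span ((fun a => (monomial a (1 : K) : MvPolynomial (Fin n) K)) '' A)) :
    ∀ N : ℕ, ∀ g ∈ p, g.support.card ≤ N →
      ∀ u ∈ g.support, (monomial u (1 : K) : MvPolynomial (Fin n) K) ∈ p := by
  intro N
  induction N with
  | zero =>
    intro g _ hcard u hu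
    rw [Nat.le_zero, Finset.card_eq_zero] at hcard
    rw [hcard] at hu
    exact absurd hu (Finset.notMem_empty u)
  | succ N ih =>
    intro g hgp hcard u hu
    have hne : g.support.Nonempty := ⟨u, hu⟩
    obtain ⟨u₀, hu₀mem, hu₀⟩ := g.support.exists_max_image (fun w => (mo n).toSyn w) hne
    have hcu₀ : coeff u₀ g ≠ 0 := mem_support_iff.1 hu₀mem
    -- x^{u₀} ∈ p
    have hXu₀ : (monomial u₀ (1 : K) : MvPolynomial (Fin n) K) ∈ p := by
      have hkey := key A g u₀ hcu₀ hu₀ f.support.card f le_rfl ((hmemp g).1 hgp)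
      have : (monomial u₀ (1 : K)) ^ f.support.card ∈ p := (hmemp _).2 hkey
      exact hprime.mem_of_pow_mem _ this
    rcases eq_or_ne u u₀ with h | h
    · rw [h]; exact hXu₀
    · -- remove the top term of g and induct
      set g' := g - monomial u₀ (coeff u₀ g) with hg'def
      have hg'p : g' ∈ p := by
        apply Ideal.sub_mem _ hgp
        have : (monomial u₀ (coeff u₀ g) : MvPolynomial (Fin n) K)
            = C (coeff u₀ g) * monomial u₀ (1 : K) := by
          rw [C_mul_monomial, mul_one]
        rw [this]
        exact Ideal.mul_mem_left p _ hXu₀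
      have hsupp' : g'.support ⊆ g.support.erase u₀ := by
        intro v hv
        rw [mem_support_iff, hg'def, coeff_sub, coeff_monomial] at hv
        rcases eq_or_ne u₀ v with h' | h'
        · rw [if_pos h', h', sub_self] at hv
          exact absurd rfl hv
        · rw [if_neg h', sub_zero] at hv
          exact Finset.mem_erase.2 ⟨Ne.symm h', mem_support_iff.2 hv⟩
      have hcard' : g'.support.card ≤ N := by
        have h1 := Finset.card_erase_of_mem hu₀mem
        have := Finset.card_le_card hsupp'
        omega
      have hu' : u ∈ g'.support := by
        rw [mem_support_iff, hg'def, coeff_sub, coeff_monomial,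
          if_neg (fun h' => h (h'.symm)), sub_zero]
        exact mem_support_iff.1 hu
      exact ih g' hg'p hcard' u hu'

end Aux

/-- Every associated prime of `S/I`, for a monomial ideal `I ⊆ S = K[x_1, ..., x_n]`,
is a monomial prime ideal `P_F = ({x_i : i ∈ F})` for some `F ⊆ {1, ..., n}`. -/
theorem stmt12 {K : Type*} [Field K] (n : ℕ)
    (I : Ideal (MvPolynomial (Fin n) K)) (hI : IsMonomialIdeal I) :
    ∀ p ∈ associatedPrimes (MvPolynomial (Fin n) K) (MvPolynomial (Fin n) K ⧸ I),
      ∃ F : Set (Fin n), p = Ideal.span ((X : Fin n → MvPolynomial (Fin n) K) '' F) := by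
  obtain ⟨A, hA⟩ := hI
  intro p hp
  obtain ⟨hprime, x, hx⟩ := (isAssociatedPrime_iff).1 hp
  obtain ⟨f, rfl⟩ := Ideal.Quotient.mk_surjective x
  have hmemp : ∀ g : MvPolynomial (Fin n) K, g ∈ p ↔
      g * f ∈ Ideal.span ((fun a => (monomial a (1 : K) : MvPolynomial (Fin n) K)) '' A) := by
    intro g
    rw [hx, Submodule.mem_colon_singleton, Submodule.mem_bot, ← hA]
    constructor
    · intro h
      have : (Ideal.Quotient.mk I) (g * f) = 0 := by
        rw [map_mul]
        exact h
      exact (Ideal.Quotient.eq_zero_iff_mem).1 this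
    · intro h
      show g • (Ideal.Quotient.mk I f) = 0
      have : g • (Ideal.Quotient.mk I f) = Ideal.Quotient.mk I (g * f) := by
        rw [map_mul]
        rfl
      rw [this]
      exact (Ideal.Quotient.eq_zero_iff_mem).2 h
  refine ⟨{i | X i ∈ p}, le_antisymm ?_ ?_⟩
  · intro g hg
    rw [mem_ideal_span_X_image]
    intro u hu
    have hmon : (monomial u (1 : K) : MvPolynomial (Fin n) K) ∈ p :=
      comp_mem A p hprime f hmemp g.support.card g hg le_rfl u hu
    have hu0 : u ≠ 0 := by
      rintro rfl
      rw [monomial_zero', C_1] at hmon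
      exact hprime.ne_top (Ideal.eq_top_of_isUnit_mem p hmon isUnit_one)
    have hprod : (u.prod fun i e => (X i : MvPolynomial (Fin n) K) ^ e) ∈ p := by
      have := monomial_eq (s := u) (a := (1 : K))
      rw [C_1, one_mul] at this
      rw [← this]
      exact hmon
    rw [Finsupp.prod] at hprod
    rw [Ideal.IsPrime.prod_mem_iff] at hprod
    obtain ⟨i, hi, hXi⟩ := hprod
    exact ⟨i, hprime.mem_of_pow_mem _ hXi, Finsupp.mem_support_iff.1 hi⟩
  · rw [Ideal.span_le]
    rintro _ ⟨i, hi, rfl⟩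
    exact hi
end
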